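/- Let P ⊂ ℝ^n be a convex polytope with linear functional ℓ nonconstant on edges. Define the witness relation O(v,w) iff there exists a face G of P with ℓ attaining its minimum on G at v and maximum at w, and define the chain order C as the reflexive transitive closure of the directed-edge relation (v → w iff (v,w) is an edge with ℓ(v) < ℓ(w)). Then C equals the reflexive transitive closure of O. -/

import Mathlib

open Set

variable {V : Type*} [NormedAddCommGroup V] [NormedSpace ℝ V]

/-- A (nonempty) convex polytope: the convex hull of a nonempty finite set of points. -/
def IsPolytope (P : Set V) : Prop :=
  ∃ s : Finset V, s.Nonempty ∧ P = convexHull ℝ (s : Set V)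

/-- A (nonempty exposed) face of a polytope. -/
def IsFace (P F : Set V) : Prop :=
  F.Nonempty ∧ IsExposed ℝ P F

/-- A vertex of a polytope: a point whose singleton is a face. -/
def IsVertex (P : Set V) (v : V) : Prop := IsFace P {v}

/-- An edge of a polytope: a face which is a nondegenerate segment. -/
def IsEdge (P : Set V) (v w : V) : Prop := v ≠ w ∧ IsFace P (segment ℝ v w)

/-- `ℓ` attains its maximum on `G` at `v`. -/
def MaxAt (ℓ : V →L[ℝ] ℝ) (G : Set V) (v : V) : Prop := v ∈ G ∧ ∀ x ∈ G, ℓ x ≤ ℓ v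

/-- `ℓ` attains its minimum on `G` at `v`. -/
def MinAt (ℓ : V →L[ℝ] ℝ) (G : Set V) (v : V) : Prop := v ∈ G ∧ ∀ x ∈ G, ℓ v ≤ ℓ x

/-- `ℓ` is nonconstant on every edge of `P`. -/
def NonconstOnEdges (P : Set V) (ℓ : V →L[ℝ] ℝ) : Prop :=
  ∀ v w, IsEdge P v w → ℓ v ≠ ℓ w

/-- Directed edge: an edge oriented by increasing `ℓ`. -/
def DirEdge (P : Set V) (ℓ : V →L[ℝ] ℝ) (v w : V) : Prop := IsEdge P v w ∧ ℓ v < ℓ w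

/-- The witness relation `O(v,w)`: some face of `P` has ℓ-minimum at `v` and
ℓ-maximum at `w`. -/
def ORel (P : Set V) (ℓ : V →L[ℝ] ℝ) (v w : V) : Prop :=
  ∃ G, IsFace P G ∧ MinAt ℓ G v ∧ MaxAt ℓ G w

/-- `O⁻(v)`: the union of relative interiors of faces of `P` on which `ℓ` attains
its maximum at `v`. -/
def Oneg (P : Set V) (ℓ : V →L[ℝ] ℝ) (v : V) : Set V :=
  ⋃ G ∈ {G : Set V | IsFace P G ∧ MaxAt ℓ G v}, intrinsicInterior ℝ G

/-- `O⁺(v)`: the union of relative interiors of faces of `P` on which `ℓ` attains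
its minimum at `v`. -/
def Opos (P : Set V) (ℓ : V →L[ℝ] ℝ) (v : V) : Set V :=
  ⋃ G ∈ {G : Set V | IsFace P G ∧ MinAt ℓ G v}, intrinsicInterior ℝ G

/-- `F⁻(v)`: the closure of `O⁻(v)`. -/
def Fneg (P : Set V) (ℓ : V →L[ℝ] ℝ) (v : V) : Set V := closure (Oneg P ℓ v)

/-- `F⁺(v)`: the closure of `O⁺(v)`. -/
def Fpos (P : Set V) (ℓ : V →L[ℝ] ℝ) (v : V) : Set V := closure (Opos P ℓ v)

/-- The partition `O⁻` is a stratification. -/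
def StratNeg (P : Set V) (ℓ : V →L[ℝ] ℝ) : Prop :=
  ∀ u w : V, IsVertex P u → IsVertex P w →
    (Oneg P ℓ u ∩ Fneg P ℓ w).Nonempty → Oneg P ℓ u ⊆ Fneg P ℓ w

/-- The dimension of a subset of `V` (dimension of its affine span). -/
noncomputable def dimS (F : Set V) : ℕ := Module.finrank ℝ (vectorSpan ℝ F)


open scoped Classical
lemma hull_le_sup' (u : Finset V) (hu : u.Nonempty) (f : V →L[ℝ] ℝ) {x : V}
    (hx : x ∈ convexHull ℝ (u : Set V)) : f x ≤ u.sup' hu f := by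
  have hsub : (u : Set V) ⊆ {y | f y ≤ u.sup' hu f} := fun p hp => by
    exact Finset.le_sup' (f := fun q => f q) (by simpa using hp)
  exact convexHull_min hsub (convex_halfSpace_le ⟨f.map_add, f.map_smul⟩ _) hx

lemma sup'_le_hull (u : Finset V) (hu : u.Nonempty) (f : V →L[ℝ] ℝ) {m : ℝ}
    (h : ∀ p ∈ u, m ≤ f p) {x : V} (hx : x ∈ convexHull ℝ (u : Set V)) : m ≤ f x := by
  have hsub : (u : Set V) ⊆ {y | m ≤ f y} := fun p hp => h p (by simpa using hp)
  exact convexHull_min hsub (convex_halfSpace_ge ⟨f.map_add, f.map_smul⟩ _) hx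

/-- The exposed set of a functional on a polytope is the hull of the maximizing points. -/
lemma exposedSet_eq (u : Finset V) (hu : u.Nonempty) (f : V →L[ℝ] ℝ) :
    {x ∈ convexHull ℝ (u : Set V) | ∀ y ∈ convexHull ℝ (u : Set V), f y ≤ f x}
      = convexHull ℝ (↑(u.filter (fun p => f p = u.sup' hu f)) : Set V) := by
  set m := u.sup' hu f with hm
  obtain ⟨p₀, hp₀u, hp₀⟩ := Finset.exists_mem_eq_sup' hu f
  apply Set.Subset.antisymm
  · rintro x ⟨hxC, hxmax⟩
    have hxm : f x = m := by
      have h1 : f x ≤ m := hull_le_sup' u hu f hxC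
      have h2 : m ≤ f x := by
        have := hxmax p₀ (subset_convexHull ℝ _ (by simpa using hp₀u))
        rw [hm, hp₀]
        exact this
      linarith
    rw [Finset.convexHull_eq] at hxC
    obtain ⟨w, hw0, hw1, hwx⟩ := hxC
    have hwsum : ∑ p ∈ u, w p • p = x := by
      rw [Finset.centerMass, hw1] at hwx
      simpa using hwx
    have hfx : ∑ p ∈ u, w p * f p = f x := by
      rw [← hwsum]
      simp [map_sum]
    have hzero : ∀ p ∈ u, w p * (m - f p) = 0 := by
      have hsum0 : ∑ p ∈ u, w p * (m - f p) = 0 := by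
        have : ∑ p ∈ u, w p * (m - f p) = (∑ p ∈ u, w p) * m - ∑ p ∈ u, w p * f p := by
          rw [Finset.sum_mul, ← Finset.sum_sub_distrib]
          congr 1; ext p; ring
        rw [this, hw1, hfx, hxm]; ring
      have hnn : ∀ p ∈ u, 0 ≤ w p * (m - f p) := fun p hp =>
        mul_nonneg (hw0 p hp) (by have := Finset.le_sup' f hp; linarith [Finset.le_sup' (f := fun q => f q) hp])
      exact (Finset.sum_eq_zero_iff_of_nonneg hnn).1 hsum0
    have hx' : x = (u.filter (fun p => f p = m)).centerMass w id := by
      rw [Finset.centerMass_subset id (Finset.filter_subset _ u)]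
      · exact hwx.symm
      · intro p hp hpn
        by_contra hwp
        have hfp : f p = m := by
          have := hzero p hp
          rcases mul_eq_zero.1 this with h | h
          · exact absurd h hwp
          · linarith [Finset.le_sup' (f := fun q => f q) hp]
        exact hpn (Finset.mem_filter.2 ⟨hp, hfp⟩)
    rw [hx']
    apply Finset.centerMass_mem_convexHull
    · intro p hp; exact hw0 p (Finset.mem_filter.1 hp).1
    · have : ∑ p ∈ u.filter (fun p => f p = m), w p = 1 := by
        rw [← hw1]
        apply Finset.sum_subset (Finset.filter_subset _ u)
        intro p hp hpn
        by_contra hwp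
        have := hzero p hp
        rcases mul_eq_zero.1 this with h | h
        · exact hwp h
        · exact hpn (Finset.mem_filter.2 ⟨hp, by linarith [Finset.le_sup' (f := fun q => f q) hp]⟩)
      rw [this]; norm_num
    · intro p hp; exact Finset.mem_coe.2 hp
  · intro y hy
    have hfilsub : (↑(u.filter (fun p => f p = m)) : Set V) ⊆ (u : Set V) := by
      simp only [Finset.coe_subset]; exact Finset.filter_subset _ u
    have hyC : y ∈ convexHull ℝ (u : Set V) := convexHull_mono hfilsub hy
    have hfy : m ≤ f y :=
      sup'_le_hull _ ⟨p₀, Finset.mem_filter.2 ⟨hp₀u, hp₀.symm⟩⟩ f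
        (fun p hp => le_of_eq (Finset.mem_filter.1 hp).2.symm) hy
    exact ⟨hyC, fun z hz => le_trans (hull_le_sup' u hu f hz) hfy⟩
lemma exposedSet_eq_level (u : Finset V) (hu : u.Nonempty) (f : V →L[ℝ] ℝ) :
    {x ∈ convexHull ℝ (u : Set V) | ∀ y ∈ convexHull ℝ (u : Set V), f y ≤ f x}
      = {x ∈ convexHull ℝ (u : Set V) | f x = u.sup' hu f} := by
  obtain ⟨p₀, hp₀u, hp₀⟩ := Finset.exists_mem_eq_sup' hu f
  ext x
  constructor
  · rintro ⟨hx, hmax⟩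
    refine ⟨hx, le_antisymm (hull_le_sup' u hu f hx) ?_⟩
    rw [hp₀]
    exact hmax p₀ (subset_convexHull ℝ _ (by simpa using hp₀u))
  · rintro ⟨hx, hfx⟩
    exact ⟨hx, fun y hy => by rw [hfx]; exact hull_le_sup' u hu f hy⟩

/-- An exposed face of a polytope is the hull of the original points it contains. -/
lemma face_hull {u : Finset V} {F : Set V} (hF : F.Nonempty)
    (hex : IsExposed ℝ (convexHull ℝ (u : Set V)) F) :
    F = convexHull ℝ (↑(u.filter (fun p => p ∈ F)) : Set V) := by
  obtain ⟨l, hl⟩ := hex hF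
  have hu : u.Nonempty := by
    rcases hF with ⟨x, hx⟩
    by_contra h
    rw [Finset.not_nonempty_iff_eq_empty] at h
    rw [hl, h] at hx
    simp at hx
  have h1 := exposedSet_eq u hu l
  have h2 := exposedSet_eq_level u hu l
  have hfil : u.filter (fun p => l p = u.sup' hu l) = u.filter (fun p => p ∈ F) := by
    apply Finset.filter_congr
    intro p hp
    have hpC : p ∈ convexHull ℝ (u : Set V) := subset_convexHull ℝ _ (by simpa using hp)
    constructor
    · intro hlp
      rw [hl, h2]
      exact ⟨hpC, hlp⟩
    · intro hpF
      rw [hl, h2] at hpF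
      exact hpF.2
  conv_lhs => rw [hl, h1, hfil]

/-- Points of `u` lying in an exposed face witness membership: a vertex is in `u`. -/
lemma vertex_mem_finset {u : Finset V} {v : V} (hex : IsExposed ℝ (convexHull ℝ (u : Set V)) {v}) :
    v ∈ u := by
  have h := face_hull (Set.singleton_nonempty v) hex
  have hne : (u.filter (fun p => p ∈ ({v} : Set V))).Nonempty := by
    by_contra hc
    rw [Finset.not_nonempty_iff_eq_empty] at hc
    have hv : v ∈ ({v} : Set V) := rfl
    rw [h] at hv
    have hne := Finset.coe_nonempty.1 (convexHull_nonempty_iff.1 ⟨v, hv⟩)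
    rw [← Finset.not_nonempty_iff_eq_empty] at hc
    exact hc (by convert hne)
  obtain ⟨p, hp⟩ := hne
  obtain ⟨hpu, hpv⟩ := Finset.mem_filter.1 hp
  simp only [Set.mem_singleton_iff] at hpv
  exact hpv ▸ hpu

/-- Building an exposed face from a functional. -/
lemma isExposed_of_level (u : Finset V) (hu : u.Nonempty) (g : V →L[ℝ] ℝ) :
    IsExposed ℝ (convexHull ℝ (u : Set V))
      (convexHull ℝ (↑(u.filter (fun p => g p = u.sup' hu g)) : Set V)) :=
  fun _ => ⟨g, (exposedSet_eq u hu g).symm⟩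

/-- Transitivity of exposedness for polytopes. -/
lemma isExposed_trans (u : Finset V) {G F : Set V}
    (hG : G.Nonempty) (hGex : IsExposed ℝ (convexHull ℝ (u : Set V)) G)
    (hF : F.Nonempty) (hFex : IsExposed ℝ G F) :
    IsExposed ℝ (convexHull ℝ (u : Set V)) F := by
  classical
  set C := convexHull ℝ (u : Set V) with hC
  obtain ⟨f, hf⟩ := hGex hG
  have hu : u.Nonempty := by
    rcases hG with ⟨x, hx⟩
    by_contra h
    rw [Finset.not_nonempty_iff_eq_empty] at h
    rw [hf, hC, h] at hx
    simp at hx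
  set M := u.sup' hu f with hM
  have hGlevel : G = {x ∈ C | f x = M} := hf.trans (exposedSet_eq_level u hu f)
  have hGsub : G ⊆ C := by rw [hGlevel]; exact fun x hx => hx.1
  set T := u.filter (fun p => p ∈ G) with hT
  have hGhull : G = convexHull ℝ (T : Set V) := face_hull hG hGex
  have hTne : T.Nonempty := by
    rcases hG with ⟨x, hx⟩
    by_contra hc
    rw [Finset.not_nonempty_iff_eq_empty] at hc
    rw [hGhull, hc] at hx
    simp at hx
  obtain ⟨g, hg⟩ := hFex hF
  have hFsub : F ⊆ G := by rw [hg]; exact fun x hx => hx.1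
  set mg := T.sup' hTne g with hmg
  have hFexT : IsExposed ℝ (convexHull ℝ (T : Set V)) F := fun _ => ⟨g, by rw [← hGhull]; exact hg⟩
  have hFlevel : F = {x ∈ G | g x = mg} := by
    rw [hg, hGhull]
    exact exposedSet_eq_level T hTne g
  -- members of u in G, and their f-values
  have hmemG : ∀ p ∈ u, (p ∈ G ↔ f p = M) := by
    intro p hp
    have hpC : p ∈ C := subset_convexHull ℝ _ (by simpa using hp)
    rw [hGlevel]
    exact ⟨fun h => h.2, fun h => ⟨hpC, h⟩⟩
  by_cases hD : (u.filter (fun p => p ∉ G)).Nonempty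
  · -- general case
    set D := u.filter (fun p => p ∉ G) with hDdef
    set δ := D.inf' hD (fun p => M - f p) with hδ
    have hδpos : 0 < δ := by
      rw [hδ, Finset.lt_inf'_iff]
      intro p hp
      obtain ⟨hpu, hpG⟩ := Finset.mem_filter.1 hp
      have h1 : f p ≤ M := Finset.le_sup' (f := fun q => f q) hpu
      have h2 : f p ≠ M := fun h => hpG ((hmemG p hpu).2 h)
      have := lt_of_le_of_ne h1 h2
      linarith
    set Bd := u.sup' hu (fun p => |g p|) with hBd
    have hBd0 : 0 ≤ Bd := by
      obtain ⟨p, hp⟩ := hu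
      exact le_trans (abs_nonneg (g p)) (Finset.le_sup' (f := fun q => |g q|) hp)
    have hgle : ∀ p ∈ u, |g p| ≤ Bd := fun p hp => Finset.le_sup' (f := fun q => |g q|) hp
    have hmgBd : |mg| ≤ Bd := by
      obtain ⟨q, hqT, hq⟩ := Finset.exists_mem_eq_sup' hTne g
      rw [hmg, hq]
      exact hgle q (Finset.mem_filter.1 hqT).1
    set ε := δ / (2 * Bd + 1) with hε
    have hεpos : 0 < ε := div_pos hδpos (by linarith)
    set f' : V →L[ℝ] ℝ := f + ε • g with hf'
    have hf'app : ∀ x, f' x = f x + ε * g x := fun x => rfl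
    -- key bound
    have hkey : ∀ p ∈ u, f' p ≤ M + ε * mg ∧ (f' p = M + ε * mg ↔ p ∈ F) := by
      intro p hp
      by_cases hpG : p ∈ G
      · have hfp : f p = M := (hmemG p hp).1 hpG
        have hpT : p ∈ T := Finset.mem_filter.2 ⟨hp, hpG⟩
        have hgp : g p ≤ mg := Finset.le_sup' (f := fun q => g q) hpT
        constructor
        · rw [hf'app, hfp]
          nlinarith
        · constructor
          · intro h
            rw [hf'app, hfp] at h
            have : g p = mg := by
              have := mul_left_cancel₀ (ne_of_gt hεpos) (by linarith : ε * g p = ε * mg)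
              exact this
            rw [hFlevel]
            exact ⟨hpG, this⟩
          · intro hpF
            rw [hFlevel] at hpF
            rw [hf'app, hfp, hpF.2]
      · have hpD : p ∈ D := Finset.mem_filter.2 ⟨hp, hpG⟩
        have hfp : δ ≤ M - f p := Finset.inf'_le (fun q => M - f q) hpD
        have h2 : ε * (g p - mg) < δ := by
          have h3 : g p - mg ≤ 2 * Bd := by
            have := hgle p hp
            have := abs_le.1 (hgle p hp)
            have := abs_le.1 hmgBd
            linarith
          calc ε * (g p - mg) ≤ ε * (2 * Bd) := by
                apply mul_le_mul_of_nonneg_left h3 (le_of_lt hεpos)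
            _ < δ := by
                have h4 : ε * (2 * Bd + 1) = δ := by
                  rw [hε]; field_simp
                nlinarith [hεpos, h4]
        have hlt : f' p < M + ε * mg := by
          rw [hf'app]
          nlinarith
        exact ⟨le_of_lt hlt, ⟨fun h => absurd h (ne_of_lt hlt),
          fun hpF => absurd (hFsub hpF) hpG⟩⟩
    -- a point of u achieving the max, lying in F
    have hFhullT : F = convexHull ℝ (↑(T.filter (fun p => p ∈ F)) : Set V) := face_hull hF hFexT
    have hTFne : (T.filter (fun p => p ∈ F)).Nonempty := by
      rcases hF with ⟨x, hx⟩
      by_contra hc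
      rw [Finset.not_nonempty_iff_eq_empty] at hc
      rw [hFhullT, hc] at hx
      simp at hx
    obtain ⟨q, hq⟩ := hTFne
    obtain ⟨hqT, hqF⟩ := Finset.mem_filter.1 hq
    have hqu : q ∈ u := (Finset.mem_filter.1 hqT).1
    have hq' : f' q = M + ε * mg := by
      have hqG : q ∈ G := hFsub hqF
      have h1 : f q = M := (hmemG q hqu).1 hqG
      have h2 : g q = mg := by
        rw [hFlevel] at hqF
        exact hqF.2
      rw [hf'app, h1, h2]
    have hM' : u.sup' hu f' = M + ε * mg := by
      apply le_antisymm
      · rw [Finset.sup'_le_iff]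
        intro p hp
        exact (hkey p hp).1
      · rw [← hq']
        exact Finset.le_sup' (f := fun p => f' p) hqu
    -- identify the filter sets
    have hfilters : u.filter (fun p => f' p = u.sup' hu f') = T.filter (fun p => p ∈ F) := by
      rw [hT, Finset.filter_filter]
      apply Finset.filter_congr
      intro p hp
      rw [hM']
      constructor
      · intro h
        have := ((hkey p hp).2).1 h
        exact ⟨hFsub this, this⟩
      · intro h
        exact ((hkey p hp).2).2 h.2
    intro _
    refine ⟨f', ?_⟩
    rw [exposedSet_eq u hu f', hfilters, ← hFhullT]
  · -- degenerate case : G = C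
    have hsub : (u : Set V) ⊆ G := by
      intro p hp
      rw [Finset.not_nonempty_iff_eq_empty, Finset.filter_eq_empty_iff] at hD
      by_contra hc
      exact (hD (by simpa using hp)) hc
    have hCG : C = G := by
      apply Set.Subset.antisymm _ hGsub
      rw [hC]
      exact convexHull_min hsub (hGex.convex (convex_convexHull ℝ _))
    have h := hFex
    rw [← hCG] at h
    exact h
lemma isExposed_self (A : Set V) : IsExposed ℝ A A :=
  fun _ => ⟨0, by ext x; simp⟩

/-- Every polytope has a vertex, which is one of the generating points. -/
lemma exists_vertex : ∀ (n : ℕ) (T : Finset V), T.card ≤ n → T.Nonempty →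
    ∃ v ∈ T, IsExposed ℝ (convexHull ℝ (T : Set V)) {v} := by
  intro n
  induction n with
  | zero =>
    intro T hcard hne
    obtain ⟨t, ht⟩ := hne
    exact absurd (Finset.card_pos.2 ⟨t, ht⟩) (by omega)
  | succ n ih =>
    intro T hcard hne
    by_cases hconst : ∀ a ∈ T, ∀ b ∈ T, a = b
    · obtain ⟨t, ht⟩ := hne
      refine ⟨t, ht, ?_⟩
      have hset : (T : Set V) = {t} := by
        apply Set.eq_singleton_iff_unique_mem.2
        exact ⟨by simpa using ht, fun x hx => hconst x (by simpa using hx) t ht⟩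
      have he : convexHull ℝ (T : Set V) = {t} := by rw [hset]; exact convexHull_singleton t
      exact he ▸ isExposed_self ({t} : Set V)
    · push_neg at hconst
      obtain ⟨a, ha, b, hb, hab⟩ := hconst
      obtain ⟨h, hh⟩ := SeparatingDual.exists_separating_of_ne (R := ℝ) hab
      set m := T.sup' hne h with hm
      set T' := T.filter (fun p => h p = m) with hT'
      have hT'ne : T'.Nonempty := by
        obtain ⟨p, hp, hpm⟩ := Finset.exists_mem_eq_sup' hne h
        exact ⟨p, Finset.mem_filter.2 ⟨hp, hpm.symm⟩⟩
      have hT'ssub : T' ⊂ T := by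
        rw [Finset.ssubset_iff_of_subset (Finset.filter_subset _ T)]
        rcases lt_or_ge (h a) (h b) with hlt | hle
        · exact ⟨a, ha, fun hmem => by
            have := (Finset.mem_filter.1 hmem).2
            have hbm : h b ≤ m := Finset.le_sup' (f := fun q => h q) hb
            linarith⟩
        · have hlt : h b < h a := lt_of_le_of_ne hle (fun e => hh e.symm)
          exact ⟨b, hb, fun hmem => by
            have := (Finset.mem_filter.1 hmem).2
            have ham : h a ≤ m := Finset.le_sup' (f := fun q => h q) ha
            linarith⟩
      have hcard' : T'.card ≤ n := by
        have := Finset.card_lt_card hT'ssub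
        omega
      obtain ⟨v, hvT', hvex⟩ := ih T' hcard' hT'ne
      have hex1 : IsExposed ℝ (convexHull ℝ (T : Set V)) (convexHull ℝ (T' : Set V)) :=
        isExposed_of_level T hne h
      have hG : (convexHull ℝ (T' : Set V)).Nonempty :=
        ⟨v, subset_convexHull ℝ _ (by simpa using hvT')⟩
      refine ⟨v, Finset.mem_of_subset (Finset.filter_subset _ T) hvT', ?_⟩
      exact isExposed_trans T hG hex1 (Set.singleton_nonempty v) hvex
/-- Terminal step of edge-finding: if the maximal-ratio set is "collinear", the rotated
functional exposes an edge. -/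
lemma edge_terminal (T : Finset V) (hT : T.Nonempty) (ℓ' f : V →L[ℝ] ℝ) {v : V} (B : Finset V)
    (hvT : v ∈ T)
    (hExpo : ∀ p ∈ T, p ≠ v → f p < f v)
    (hBsub : B ⊆ T) (hBne : B.Nonempty)
    (hBA : ∀ p ∈ B, ℓ' v < ℓ' p)
    (hBmax : ∀ p ∈ B, ∀ q ∈ T, ℓ' v < ℓ' q →
      (ℓ' q - ℓ' v) / (f v - f q) ≤ (ℓ' p - ℓ' v) / (f v - f p))
    (hBfull : ∀ q ∈ T, ℓ' v < ℓ' q →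
      (∀ z ∈ T, ℓ' v < ℓ' z → (ℓ' z - ℓ' v) / (f v - f z) ≤ (ℓ' q - ℓ' v) / (f v - f q)) → q ∈ B)
    (hcol : ∀ p ∈ B, ∀ q ∈ B, p ≠ q → ∃ c : ℝ, 0 < c ∧ q - v = c • (p - v)) :
    ∃ u ∈ T, ℓ' v < ℓ' u ∧ v ≠ u ∧
      IsExposed ℝ (convexHull ℝ (T : Set V)) (segment ℝ v u) := by
  classical
  -- basic facts
  have hD : ∀ q ∈ T, q ≠ v → 0 < f v - f q := fun q hq hqv => by
    have := hExpo q hq hqv; linarith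
  have hvnB : ∀ p ∈ B, p ≠ v := fun p hp he => by
    have := hBA p hp; rw [he] at this; linarith
  -- the farthest point of B
  obtain ⟨pm, hpmB, hpmmax⟩ := Finset.exists_max_image B (fun p => ‖p - v‖) hBne
  have hpmT : pm ∈ T := hBsub hpmB
  have hpmA : ℓ' v < ℓ' pm := hBA pm hpmB
  have hpmv : pm ≠ v := hvnB pm hpmB
  have hDpm : 0 < f v - f pm := hD pm hpmT hpmv
  set R := (ℓ' pm - ℓ' v) / (f v - f pm) with hR
  have hRpos : 0 < R := div_pos (by linarith) hDpm
  set g : V →L[ℝ] ℝ := R • f + ℓ' with hg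
  have hgapp : ∀ x, g x = R * f x + ℓ' x := fun x => rfl
  -- key claim
  have hkey : ∀ q ∈ T, g q ≤ g v ∧ (g q = g v ↔ (q = v ∨ q ∈ B)) := by
    intro q hqT
    by_cases hqv : q = v
    · subst hqv; exact ⟨le_refl _, by simp⟩
    · have hDq : 0 < f v - f q := hD q hqT hqv
      by_cases hqA : ℓ' v < ℓ' q
      · -- q in A
        have hrq : (ℓ' q - ℓ' v) / (f v - f q) ≤ R := hBmax pm hpmB q hqT hqA
        have hval : (ℓ' q - ℓ' v) = ((ℓ' q - ℓ' v) / (f v - f q)) * (f v - f q) :=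
          (div_mul_cancel₀ _ (ne_of_gt hDq)).symm
        have hdiff : g v - g q = (f v - f q) * (R - (ℓ' q - ℓ' v) / (f v - f q)) := by
          rw [hgapp, hgapp]
          linear_combination -hval
        constructor
        · have hnn : 0 ≤ (f v - f q) * (R - (ℓ' q - ℓ' v) / (f v - f q)) :=
            mul_nonneg (le_of_lt hDq) (sub_nonneg.2 hrq)
          linarith [hdiff, hnn]
        · constructor
          · intro he
            have h0 : (f v - f q) * (R - (ℓ' q - ℓ' v) / (f v - f q)) = 0 := by
              rw [← hdiff, he]; ring
            have hReq : (ℓ' q - ℓ' v) / (f v - f q) = R := by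
              rcases mul_eq_zero.1 h0 with h | h
              · linarith
              · linarith
            right
            apply hBfull q hqT hqA
            intro z hzT hzA
            calc (ℓ' z - ℓ' v) / (f v - f z) ≤ R := hBmax pm hpmB z hzT hzA
              _ = (ℓ' q - ℓ' v) / (f v - f q) := hReq.symm
          · intro hmem
            rcases hmem with h | hqB
            · exact absurd h hqv
            · have h1 : R ≤ (ℓ' q - ℓ' v) / (f v - f q) := hBmax q hqB pm hpmT hpmA
              have h2 : (ℓ' q - ℓ' v) / (f v - f q) = R := le_antisymm hrq h1
              have h3 : g v - g q = 0 := by rw [hdiff, h2]; ring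
              linarith
      · -- q not above v
        have hα : ℓ' q - ℓ' v ≤ 0 := by
          push_neg at hqA; linarith
        have hlt : g q < g v := by
          rw [hgapp, hgapp]
          nlinarith [mul_pos hRpos hDq, hα]
        refine ⟨le_of_lt hlt, ⟨fun h => absurd h (ne_of_lt hlt), ?_⟩⟩
        rintro (h | hqB)
        · exact absurd h hqv
        · exact absurd (hBA q hqB) hqA
  have hsup : T.sup' hT g = g v := by
    apply le_antisymm
    · rw [Finset.sup'_le_iff]
      exact fun q hq => (hkey q hq).1
    · exact Finset.le_sup' (f := fun q => g q) hvT
  have hfilter : T.filter (fun q => g q = T.sup' hT g) = insert v B := by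
    ext q
    rw [Finset.mem_filter, Finset.mem_insert, hsup]
    constructor
    · rintro ⟨hqT, heq⟩
      exact ((hkey q hqT).2).1 heq
    · rintro (h | hqB)
      · subst h; exact ⟨hvT, rfl⟩
      · exact ⟨hBsub hqB, ((hkey q (hBsub hqB)).2).2 (Or.inr hqB)⟩
  -- the hull of `insert v B` is the segment from `v` to `pm`
  have hsegmem : ∀ q ∈ B, q ∈ segment ℝ v pm := by
    intro q hqB
    by_cases hqpm : q = pm
    · subst hqpm; exact right_mem_segment ℝ v q
    · obtain ⟨c, hc, hqc⟩ := hcol pm hpmB q hqB (fun h => hqpm h.symm)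
      have hnorm : ‖q - v‖ ≤ ‖pm - v‖ := hpmmax q hqB
      have hpmpos : 0 < ‖pm - v‖ := by
        rw [norm_sub_pos_iff]; exact hpmv
      have hc1 : c ≤ 1 := by
        rw [hqc, norm_smul, Real.norm_eq_abs, abs_of_pos hc] at hnorm
        nlinarith
      rw [segment_eq_image']
      refine ⟨c, ⟨le_of_lt hc, hc1⟩, ?_⟩
      show v + c • (pm - v) = q
      rw [← hqc]
      abel
  have hhull : convexHull ℝ (↑(insert v B) : Set V) = segment ℝ v pm := by
    apply Set.Subset.antisymm
    · apply convexHull_min _ (convex_segment v pm)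
      intro x hx
      rcases Finset.mem_insert.1 (by simpa using hx) with h | hB
      · subst h; exact left_mem_segment ℝ x pm
      · exact hsegmem x hB
    · rw [← convexHull_pair]
      apply convexHull_mono
      intro x hx
      rcases hx with h | h
      · rw [h]
        exact Finset.mem_coe.2 (Finset.mem_insert_self v B)
      · simp only [Set.mem_singleton_iff] at h
        subst h
        exact Finset.mem_coe.2 (Finset.mem_insert_of_mem hpmB)
  have hexp := isExposed_of_level T hT g
  rw [hfilter, hhull] at hexp
  exact ⟨pm, hpmT, hpmA, fun h => hpmv h.symm, hexp⟩
/-- Edge-finding: from a vertex of a polytope which does not maximize `ℓ'` there is an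
exposed edge towards a strictly `ℓ'`-larger generating point. -/
lemma edge_find (T : Finset V) (hT : T.Nonempty) {v : V} (ℓ' : V →L[ℝ] ℝ)
    (hv : IsExposed ℝ (convexHull ℝ (T : Set V)) {v})
    (hlt : ∃ p ∈ T, ℓ' v < ℓ' p) :
    ∃ u ∈ T, ℓ' v < ℓ' u ∧ v ≠ u ∧
      IsExposed ℝ (convexHull ℝ (T : Set V)) (segment ℝ v u) := by
  classical
  have hvT : v ∈ T := vertex_mem_finset hv
  obtain ⟨f₀, hf₀⟩ := hv (Set.singleton_nonempty v)
  have hvmem : v ∈ {x ∈ convexHull ℝ (T : Set V) |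
      ∀ y ∈ convexHull ℝ (T : Set V), f₀ y ≤ f₀ x} := by
    rw [← hf₀]; exact rfl
  have hExpo₀ : ∀ p ∈ T, p ≠ v → f₀ p < f₀ v := by
    intro p hp hpv
    have hpG : p ∈ convexHull ℝ (T : Set V) := subset_convexHull ℝ _ (by simpa using hp)
    have hple : f₀ p ≤ f₀ v := hvmem.2 p hpG
    rcases lt_or_eq_of_le hple with h | heq
    · exact h
    · exfalso
      have hpmem : p ∈ {x ∈ convexHull ℝ (T : Set V) |
          ∀ y ∈ convexHull ℝ (T : Set V), f₀ y ≤ f₀ x} :=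
        ⟨hpG, fun y hy => le_trans (hvmem.2 y hy) (le_of_eq heq.symm)⟩
      rw [← hf₀] at hpmem
      exact hpv hpmem
  set A := T.filter (fun p => ℓ' v < ℓ' p) with hA
  have hAne : A.Nonempty := by
    obtain ⟨p, hp, h⟩ := hlt
    exact ⟨p, Finset.mem_filter.2 ⟨hp, h⟩⟩
  have hAsubT : A ⊆ T := Finset.filter_subset _ T
  have hAv : ∀ p ∈ A, ℓ' v < ℓ' p := fun p hp => (Finset.mem_filter.1 hp).2
  have hAne_v : ∀ p ∈ A, p ≠ v := fun p hp he => by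
    have := hAv p hp; rw [he] at this; linarith
  have main : ∀ n : ℕ, ∀ f : V →L[ℝ] ℝ, (∀ p ∈ T, p ≠ v → f p < f v) →
      (A.filter (fun p => ∀ q ∈ A,
        (ℓ' q - ℓ' v) / (f v - f q) ≤ (ℓ' p - ℓ' v) / (f v - f p))).card ≤ n →
      ∃ u ∈ T, ℓ' v < ℓ' u ∧ v ≠ u ∧
        IsExposed ℝ (convexHull ℝ (T : Set V)) (segment ℝ v u) := by
    intro n
    induction n with
    | zero =>
      intro f hf hcard
      exfalso
      obtain ⟨p, hp, hmax⟩ := Finset.exists_max_image A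
        (fun q => (ℓ' q - ℓ' v) / (f v - f q)) hAne
      have hmem : p ∈ A.filter (fun p => ∀ q ∈ A,
          (ℓ' q - ℓ' v) / (f v - f q) ≤ (ℓ' p - ℓ' v) / (f v - f p)) :=
        Finset.mem_filter.2 ⟨hp, hmax⟩
      have := Finset.card_pos.2 ⟨p, hmem⟩
      omega
    | succ n ih =>
      intro f hf hcard
      set B := A.filter (fun p => ∀ q ∈ A,
        (ℓ' q - ℓ' v) / (f v - f q) ≤ (ℓ' p - ℓ' v) / (f v - f p)) with hB
      have hBne : B.Nonempty := by
        obtain ⟨p, hp, hmax⟩ := Finset.exists_max_image A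
          (fun q => (ℓ' q - ℓ' v) / (f v - f q)) hAne
        exact ⟨p, Finset.mem_filter.2 ⟨hp, hmax⟩⟩
      have hBsubA : B ⊆ A := Finset.filter_subset _ A
      have hDpos : ∀ z ∈ A, 0 < f v - f z := fun z hz => by
        have := hf z (hAsubT hz) (hAne_v z hz); linarith
      by_cases hcol : ∀ p ∈ B, ∀ q ∈ B, p ≠ q → ∃ c : ℝ, 0 < c ∧ q - v = c • (p - v)
      · -- terminal case
        apply edge_terminal T hT ℓ' f B hvT hf (hBsubA.trans hAsubT) hBne
          (fun p hp => hAv p (hBsubA hp)) _ _ hcol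
        · intro p hpB q hqT hqA
          exact (Finset.mem_filter.1 hpB).2 q (Finset.mem_filter.2 ⟨hqT, hqA⟩)
        · intro q hqT hqA hqmax
          refine Finset.mem_filter.2 ⟨Finset.mem_filter.2 ⟨hqT, hqA⟩, ?_⟩
          intro z hzA
          exact hqmax z (hAsubT hzA) (hAv z hzA)
      · -- perturbation case
        push_neg at hcol
        obtain ⟨p, hpB, q, hqB, hpq, hnc⟩ := hcol
        have hpA : p ∈ A := hBsubA hpB
        have hqA : q ∈ A := hBsubA hqB
        have hαpos : 0 < ℓ' p - ℓ' v := by have := hAv p hpA; linarith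
        have hβpos : 0 < ℓ' q - ℓ' v := by have := hAv q hqA; linarith
        have hμ : (ℓ' p - ℓ' v) • (v - q) - (ℓ' q - ℓ' v) • (v - p) ≠ 0 := by
          intro h
          have h1 : (ℓ' p - ℓ' v) • (v - q) = (ℓ' q - ℓ' v) • (v - p) := sub_eq_zero.1 h
          have h2 : v - q = ((ℓ' p - ℓ' v)⁻¹ * (ℓ' q - ℓ' v)) • (v - p) := by
            have h3 := congrArg (fun x => ((ℓ' p - ℓ' v)⁻¹ : ℝ) • x) h1
            simpa [smul_smul, inv_mul_cancel₀ (ne_of_gt hαpos)] using h3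
          have h3 : q - v = ((ℓ' p - ℓ' v)⁻¹ * (ℓ' q - ℓ' v)) • (p - v) := by
            have h4 : -(v - q) = ((ℓ' p - ℓ' v)⁻¹ * (ℓ' q - ℓ' v)) • -(v - p) := by
              rw [h2, smul_neg]
            simpa [neg_sub] using h4
          exact hnc ((ℓ' p - ℓ' v)⁻¹ * (ℓ' q - ℓ' v))
            (mul_pos (inv_pos.2 hαpos) hβpos) h3
        obtain ⟨ψ, hψ⟩ := SeparatingDual.exists_ne_zero (R := ℝ) hμ
        have hψ' : (ℓ' p - ℓ' v) * (ψ v - ψ q) - (ℓ' q - ℓ' v) * (ψ v - ψ p) ≠ 0 := by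
          intro h
          apply hψ
          rw [map_sub, map_smul, map_smul]
          simp only [map_sub, smul_eq_mul]
          exact h
        have ev1 : ∀ᶠ ε in nhds (0 : ℝ), ∀ z ∈ T, z ≠ v →
            (f + ε • ψ) z < (f + ε • ψ) v := by
          rw [Filter.eventually_all_finset]
          intro z hz
          by_cases hzv : z = v
          · exact Filter.Eventually.of_forall (fun ε h => absurd hzv h)
          · have hcont : Continuous (fun ε : ℝ => (f v + ε * ψ v) - (f z + ε * ψ z)) := by
              fun_prop
            have h0 : (0 : ℝ) < (f v + 0 * ψ v) - (f z + 0 * ψ z) := by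
              have := hf z hz hzv; simpa using this
            have hev := (hcont.tendsto 0).eventually (eventually_gt_nhds h0)
            filter_upwards [hev] with ε hε _
            show f z + ε * ψ z < f v + ε * ψ v
            linarith
        have ev2 : ∀ᶠ ε in nhds (0 : ℝ), ∀ a ∈ A, ∀ b ∈ A, a ∉ B → b ∈ B →
            (ℓ' a - ℓ' v) / ((f + ε • ψ) v - (f + ε • ψ) a) <
            (ℓ' b - ℓ' v) / ((f + ε • ψ) v - (f + ε • ψ) b) := by
          rw [Filter.eventually_all_finset]
          intro a haA
          rw [Filter.eventually_all_finset]
          intro b hbA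
          by_cases hcond : a ∉ B ∧ b ∈ B
          · obtain ⟨haB, hbB⟩ := hcond
            have hr0 : (ℓ' a - ℓ' v) / (f v - f a) < (ℓ' b - ℓ' v) / (f v - f b) := by
              have hnot := haB
              rw [hB, Finset.mem_filter] at hnot
              push_neg at hnot
              obtain ⟨z, hzA, hz⟩ := hnot haA
              have hbmax := (Finset.mem_filter.1 hbB).2 z hzA
              calc (ℓ' a - ℓ' v) / (f v - f a)
                  < (ℓ' z - ℓ' v) / (f v - f z) := hz
                _ ≤ (ℓ' b - ℓ' v) / (f v - f b) := hbmax
            have hda : ContinuousAt (fun ε : ℝ => (f v + ε * ψ v) - (f a + ε * ψ a)) 0 := by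
              fun_prop
            have hdb : ContinuousAt (fun ε : ℝ => (f v + ε * ψ v) - (f b + ε * ψ b)) 0 := by
              fun_prop
            have hra : ContinuousAt (fun ε : ℝ =>
                (ℓ' a - ℓ' v) / ((f v + ε * ψ v) - (f a + ε * ψ a))) 0 :=
              ContinuousAt.div continuousAt_const hda
                (by simpa using (ne_of_gt (hDpos a haA)))
            have hrb : ContinuousAt (fun ε : ℝ =>
                (ℓ' b - ℓ' v) / ((f v + ε * ψ v) - (f b + ε * ψ b))) 0 :=
              ContinuousAt.div continuousAt_const hdb
                (by simpa using (ne_of_gt (hDpos b hbA)))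
            have hsub := hrb.sub hra
            have hpos : (0 : ℝ) < (fun ε : ℝ =>
                (ℓ' b - ℓ' v) / ((f v + ε * ψ v) - (f b + ε * ψ b)) -
                (ℓ' a - ℓ' v) / ((f v + ε * ψ v) - (f a + ε * ψ a))) 0 := by
              have e1 : (f v + (0:ℝ) * ψ v) - (f b + 0 * ψ b) = f v - f b := by ring
              have e2 : (f v + (0:ℝ) * ψ v) - (f a + 0 * ψ a) = f v - f a := by ring
              show (0:ℝ) < (ℓ' b - ℓ' v) / ((f v + 0 * ψ v) - (f b + 0 * ψ b)) -
                (ℓ' a - ℓ' v) / ((f v + 0 * ψ v) - (f a + 0 * ψ a))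
              rw [e1, e2]
              linarith [hr0]
            have hev := hsub.eventually (eventually_gt_nhds hpos)
            filter_upwards [hev] with ε hε _ _
            show (ℓ' a - ℓ' v) / ((f v + ε * ψ v) - (f a + ε * ψ a)) <
              (ℓ' b - ℓ' v) / ((f v + ε * ψ v) - (f b + ε * ψ b))
            simp only [Pi.sub_apply] at hε
            linarith [hε]
          · rcases not_and_or.1 hcond with h | h
            · rw [not_not] at h
              exact Filter.Eventually.of_forall (fun ε ha hb => absurd h ha)
            · exact Filter.Eventually.of_forall (fun ε ha hb => absurd hb h)
        have hand := (((ev1.and ev2).filter_mono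
            (nhdsWithin_le_nhds (s := ({0}ᶜ : Set ℝ)))).and
          (eventually_mem_nhdsWithin (a := (0:ℝ)) (s := ({0}ᶜ : Set ℝ))))
        obtain ⟨ε, hε, hεne⟩ := hand.exists
        rw [Set.mem_compl_singleton_iff] at hεne
        obtain ⟨hf1, h2⟩ := hε
        set B1 := A.filter (fun p => ∀ q ∈ A,
          (ℓ' q - ℓ' v) / ((f + ε • ψ) v - (f + ε • ψ) q) ≤
          (ℓ' p - ℓ' v) / ((f + ε • ψ) v - (f + ε • ψ) p)) with hB1
        have hB1sub : B1 ⊆ B := by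
          intro x hx
          obtain ⟨hxA, hxmax⟩ := Finset.mem_filter.1 hx
          by_contra hxB
          obtain ⟨b, hbB⟩ := hBne
          have hlt1 := h2 x hxA b (hBsubA hbB) hxB hbB
          have hle1 := hxmax b (hBsubA hbB)
          linarith
        have hD1pos : ∀ z ∈ A, 0 < (f + ε • ψ) v - (f + ε • ψ) z := fun z hz => by
          have := hf1 z (hAsubT hz) (hAne_v z hz); linarith
        have hnotboth : p ∉ B1 ∨ q ∉ B1 := by
          by_contra hcon
          push_neg at hcon
          obtain ⟨hp1, hq1⟩ := hcon
          have heq1 : (ℓ' p - ℓ' v) / ((f + ε • ψ) v - (f + ε • ψ) p) =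
              (ℓ' q - ℓ' v) / ((f + ε • ψ) v - (f + ε • ψ) q) :=
            le_antisymm ((Finset.mem_filter.1 hq1).2 p hpA)
              ((Finset.mem_filter.1 hp1).2 q hqA)
          have heq0 : (ℓ' p - ℓ' v) / (f v - f p) = (ℓ' q - ℓ' v) / (f v - f q) :=
            le_antisymm ((Finset.mem_filter.1 hqB).2 p hpA)
              ((Finset.mem_filter.1 hpB).2 q hqA)
          have e1 : (ℓ' p - ℓ' v) * ((f + ε • ψ) v - (f + ε • ψ) q) =
              (ℓ' q - ℓ' v) * ((f + ε • ψ) v - (f + ε • ψ) p) :=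
            (div_eq_div_iff (ne_of_gt (hD1pos p hpA)) (ne_of_gt (hD1pos q hqA))).1 heq1
          have e0 : (ℓ' p - ℓ' v) * (f v - f q) = (ℓ' q - ℓ' v) * (f v - f p) :=
            (div_eq_div_iff (ne_of_gt (hDpos p hpA)) (ne_of_gt (hDpos q hqA))).1 heq0
          have hrw1 : (f + ε • ψ) v - (f + ε • ψ) q = (f v - f q) + ε * (ψ v - ψ q) := by
            show (f v + ε * ψ v) - (f q + ε * ψ q) = _
            ring
          have hrw2 : (f + ε • ψ) v - (f + ε • ψ) p = (f v - f p) + ε * (ψ v - ψ p) := by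
            show (f v + ε * ψ v) - (f p + ε * ψ p) = _
            ring
          rw [hrw1, hrw2] at e1
          have hzero : ε * ((ℓ' p - ℓ' v) * (ψ v - ψ q) - (ℓ' q - ℓ' v) * (ψ v - ψ p)) = 0 := by
            linear_combination e1 - e0
          rcases mul_eq_zero.1 hzero with h | h
          · exact hεne h
          · exact hψ' h
        have hssub : B1 ⊂ B := by
          refine ⟨hB1sub, fun hc => ?_⟩
          rcases hnotboth with h | h
          · exact h (hc hpB)
          · exact h (hc hqB)
        have hcard1 : B1.card ≤ n := by
          have h1 := Finset.card_lt_card hssub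
          have h2' : B.card ≤ n + 1 := hcard
          omega
        exact ih (f + ε • ψ) hf1 hcard1
  exact main ((A.filter (fun p => ∀ q ∈ A,
      (ℓ' q - ℓ' v) / (f₀ v - f₀ q) ≤ (ℓ' p - ℓ' v) / (f₀ v - f₀ p))).card) f₀ hExpo₀ (le_refl _)
lemma mem_segment_param (ℓ : V →L[ℝ] ℝ) {a b x : V} (hx : x ∈ segment ℝ a b) :
    ∃ t : ℝ, 0 ≤ t ∧ t ≤ 1 ∧ x = a + t • (b - a) ∧ ℓ x = ℓ a + t * (ℓ b - ℓ a) := by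
  rw [segment_eq_image'] at hx
  obtain ⟨t, ⟨ht0, ht1⟩, hxt⟩ := hx
  refine ⟨t, ht0, ht1, hxt.symm, ?_⟩
  rw [← hxt]
  simp [map_add, map_smul, smul_eq_mul, mul_sub]

lemma segment_max_exposed {a b : V} (ℓ : V →L[ℝ] ℝ) (hab : ℓ a < ℓ b) :
    IsExposed ℝ (segment ℝ a b) {b} := by
  intro _
  refine ⟨ℓ, ?_⟩
  apply Set.Subset.antisymm
  · rintro x hx
    rw [Set.mem_singleton_iff] at hx
    rw [hx]
    refine ⟨right_mem_segment ℝ a b, ?_⟩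
    intro y hy
    obtain ⟨t, ht0, ht1, _, hℓy⟩ := mem_segment_param ℓ hy
    nlinarith
  · rintro x ⟨hxseg, hxmax⟩
    obtain ⟨t, ht0, ht1, hxt, hℓx⟩ := mem_segment_param ℓ hxseg
    have hb : ℓ b ≤ ℓ x := hxmax b (right_mem_segment ℝ a b)
    have ht : t = 1 := by nlinarith
    rw [Set.mem_singleton_iff, hxt, ht, one_smul]
    abel

/-- If `ℓ` is nonconstant on edges, any maximizer on a face is its unique maximizer
and is a vertex of the face. -/
lemma max_vertex (s : Finset V) (ℓ : V →L[ℝ] ℝ)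
    (hℓ : NonconstOnEdges (convexHull ℝ (s : Set V)) ℓ)
    {G : Set V} {T : Finset V} (hTne : T.Nonempty)
    (hGhull : G = convexHull ℝ (T : Set V))
    (hGex : IsExposed ℝ (convexHull ℝ (s : Set V)) G)
    {w : V} (hw : MaxAt ℓ G w) :
    IsExposed ℝ G {w} ∧ ∀ b, MaxAt ℓ G b → b = w := by
  classical
  set m := T.sup' hTne ℓ with hm
  have hG : G.Nonempty := ⟨w, hw.1⟩
  have hTsubG : (T : Set V) ⊆ G := by rw [hGhull]; exact subset_convexHull ℝ _
  -- the max face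
  set T' := T.filter (fun p => ℓ p = m) with hT'
  have hT'ne : T'.Nonempty := by
    obtain ⟨p, hp, hpm⟩ := Finset.exists_mem_eq_sup' hTne ℓ
    exact ⟨p, Finset.mem_filter.2 ⟨hp, hpm.symm⟩⟩
  have hFex : IsExposed ℝ G (convexHull ℝ (T' : Set V)) := by
    have h := isExposed_of_level T hTne ℓ
    rw [← hGhull] at h
    exact h
  have hmaxmem : ∀ b, MaxAt ℓ G b → b ∈ convexHull ℝ (T' : Set V) := by
    intro b hb
    have h1 : b ∈ {x ∈ convexHull ℝ (T : Set V) |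
        ∀ y ∈ convexHull ℝ (T : Set V), ℓ y ≤ ℓ x} := by
      rw [← hGhull]
      exact ⟨hb.1, fun y hy => hb.2 y hy⟩
    rw [exposedSet_eq T hTne ℓ] at h1
    exact h1
  -- T' is a singleton, else we get an ℓ-constant edge
  have hsingle : ∀ a ∈ T', ∀ b ∈ T', a = b := by
    by_contra hc
    push_neg at hc
    obtain ⟨a, haT', b, hbT', hab⟩ := hc
    obtain ⟨v₀, hv₀T', hv₀ex⟩ := exists_vertex T'.card T' (le_refl _) hT'ne
    have hex2 : ∃ b' ∈ T', b' ≠ v₀ := by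
      by_cases h : a = v₀
      · exact ⟨b, hbT', fun hbv => hab (h.trans hbv.symm) ⟩
      · exact ⟨a, haT', h⟩
    obtain ⟨b', hb'T', hb'v₀⟩ := hex2
    obtain ⟨h, hh⟩ := SeparatingDual.exists_separating_of_ne (R := ℝ) (Ne.symm hb'v₀)
    have hsep : ∃ ℓ'' : V →L[ℝ] ℝ, ℓ'' v₀ < ℓ'' b' := by
      rcases lt_or_gt_of_ne hh with hlt | hgt
      · exact ⟨h, hlt⟩
      · exact ⟨-h, by simpa using hgt⟩
    obtain ⟨ℓ'', hℓ''⟩ := hsep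
    obtain ⟨u, huT', hℓu, hvu, hseg⟩ := edge_find T' hT'ne ℓ'' hv₀ex ⟨b', hb'T', hℓ''⟩
    -- lift the edge to the whole polytope
    have hT'hullne : (convexHull ℝ (T' : Set V)).Nonempty :=
      ⟨v₀, subset_convexHull ℝ _ (by simpa using hv₀T')⟩
    have hex3 : IsExposed ℝ (convexHull ℝ (s : Set V)) (convexHull ℝ (T' : Set V)) :=
      isExposed_trans s hG hGex hT'hullne hFex
    have hex4 : IsExposed ℝ (convexHull ℝ (s : Set V)) (segment ℝ v₀ u) :=
      isExposed_trans s hT'hullne hex3 ⟨v₀, left_mem_segment ℝ v₀ u⟩ hseg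
    have hedge : IsEdge (convexHull ℝ (s : Set V)) v₀ u :=
      ⟨hvu, ⟨v₀, left_mem_segment ℝ v₀ u⟩, hex4⟩
    apply hℓ v₀ u hedge
    have h1 : ℓ v₀ = m := (Finset.mem_filter.1 hv₀T').2
    have h2 : ℓ u = m := (Finset.mem_filter.1 huT').2
    rw [h1, h2]
  obtain ⟨t, htT'⟩ := hT'ne
  have hT'eq : (T' : Set V) = {t} := by
    apply Set.eq_singleton_iff_unique_mem.2
    exact ⟨by simpa using htT', fun x hx => hsingle x (by simpa using hx) t htT'⟩
  have hhull : convexHull ℝ (T' : Set V) = {t} := by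
    rw [hT'eq]; exact convexHull_singleton t
  have hwt : w = t := by
    have := hmaxmem w hw
    rw [hhull] at this
    exact this
  subst hwt
  constructor
  · rw [← hhull]
    exact hFex
  · intro b hb
    have := hmaxmem b hb
    rw [hhull] at this
    exact this
/-- Monotone edge-path from any vertex of a face to the maximizer of the face. -/
lemma path_lemma (s : Finset V) (ℓ : V →L[ℝ] ℝ)
    (hℓ : NonconstOnEdges (convexHull ℝ (s : Set V)) ℓ) :
    ∀ n : ℕ, ∀ T : Finset V, ∀ hTne : T.Nonempty,
      IsExposed ℝ (convexHull ℝ (s : Set V)) (convexHull ℝ (T : Set V)) →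
      ∀ v w : V, IsExposed ℝ (convexHull ℝ (T : Set V)) {v} →
        MaxAt ℓ (convexHull ℝ (T : Set V)) w →
        (T.filter (fun p => ℓ v < ℓ p)).card ≤ n →
        Relation.ReflTransGen (DirEdge (convexHull ℝ (s : Set V)) ℓ) v w := by
  intro n
  induction n with
  | zero =>
    intro T hTne hTex v w hv hw hcard
    have hfe : ¬ (T.filter (fun p => ℓ v < ℓ p)).Nonempty := by
      intro hne
      have := Finset.card_pos.2 hne
      omega
    have hvT : v ∈ T := vertex_mem_finset hv
    have hvG : v ∈ convexHull ℝ (T : Set V) := subset_convexHull ℝ _ (by simpa using hvT)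
    have hall : ∀ p ∈ T, ℓ p ≤ ℓ v := by
      intro p hp
      by_contra hcon
      push_neg at hcon
      exact hfe ⟨p, Finset.mem_filter.2 ⟨hp, hcon⟩⟩
    have hmaxv : MaxAt ℓ (convexHull ℝ (T : Set V)) v :=
      ⟨hvG, fun x hx => le_trans (hull_le_sup' T hTne ℓ hx) (Finset.sup'_le hTne ℓ hall)⟩
    have hvw := (max_vertex s ℓ hℓ hTne rfl hTex hw).2 v hmaxv
    exact hvw ▸ Relation.ReflTransGen.refl
  | succ n ih =>
    intro T hTne hTex v w hv hw hcard
    by_cases hfe : (T.filter (fun p => ℓ v < ℓ p)).Nonempty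
    · obtain ⟨p, hpfil⟩ := hfe
      obtain ⟨hpT, hpv⟩ := Finset.mem_filter.1 hpfil
      obtain ⟨u, huT, hℓu, hvu, hseg⟩ := edge_find T hTne ℓ hv ⟨p, hpT, hpv⟩
      have hsegne : (segment ℝ v u).Nonempty := ⟨v, left_mem_segment ℝ v u⟩
      have hullTne : (convexHull ℝ (T : Set V)).Nonempty :=
        ⟨u, subset_convexHull ℝ _ (by simpa using huT)⟩
      have hsegP : IsExposed ℝ (convexHull ℝ (s : Set V)) (segment ℝ v u) :=
        isExposed_trans s hullTne hTex hsegne hseg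
      have hdir : DirEdge (convexHull ℝ (s : Set V)) ℓ v u := ⟨⟨hvu, hsegne, hsegP⟩, hℓu⟩
      have huex : IsExposed ℝ (convexHull ℝ (T : Set V)) {u} :=
        isExposed_trans T hsegne hseg (Set.singleton_nonempty u) (segment_max_exposed ℓ hℓu)
      have hssub : T.filter (fun q => ℓ u < ℓ q) ⊂ T.filter (fun q => ℓ v < ℓ q) := by
        constructor
        · intro z hz
          obtain ⟨hzT, hzu⟩ := Finset.mem_filter.1 hz
          exact Finset.mem_filter.2 ⟨hzT, lt_trans hℓu hzu⟩
        · intro hcontra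
          have hu1 : u ∈ T.filter (fun q => ℓ v < ℓ q) := Finset.mem_filter.2 ⟨huT, hℓu⟩
          have hu2 := hcontra hu1
          have := (Finset.mem_filter.1 hu2).2
          exact lt_irrefl _ this
      have hcard' : (T.filter (fun q => ℓ u < ℓ q)).card ≤ n := by
        have := Finset.card_lt_card hssub
        omega
      exact Relation.ReflTransGen.head hdir (ih T hTne hTex u w huex hw hcard')
    · -- no larger point: v is the maximizer
      have hvT : v ∈ T := vertex_mem_finset hv
      have hvG : v ∈ convexHull ℝ (T : Set V) := subset_convexHull ℝ _ (by simpa using hvT)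
      have hall : ∀ p ∈ T, ℓ p ≤ ℓ v := by
        intro p hp
        by_contra hcon
        push_neg at hcon
        exact hfe ⟨p, Finset.mem_filter.2 ⟨hp, hcon⟩⟩
      have hmaxv : MaxAt ℓ (convexHull ℝ (T : Set V)) v :=
        ⟨hvG, fun x hx => le_trans (hull_le_sup' T hTne ℓ hx) (Finset.sup'_le hTne ℓ hall)⟩
      have hvw := (max_vertex s ℓ hℓ hTne rfl hTex hw).2 v hmaxv
      exact hvw ▸ Relation.ReflTransGen.refl
/-- The chain order `C` (reflexive transitive closure of the
directed-edge relation) equals the reflexive transitive closure of the witness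
relation `O`. -/
theorem stmt9 (P : Set V) (hP : IsPolytope P) (ℓ : V →L[ℝ] ℝ)
    (hℓ : NonconstOnEdges P ℓ) :
    ∀ v w : V, Relation.ReflTransGen (DirEdge P ℓ) v w ↔
      Relation.ReflTransGen (ORel P ℓ) v w := by
  classical
  obtain ⟨s, hsne, rfl⟩ := hP
  intro v w
  constructor
  · intro h
    refine Relation.ReflTransGen.mono ?_ _ _ h
    rintro a b ⟨hedge, hab⟩
    refine ⟨segment ℝ a b, hedge.2, ⟨left_mem_segment ℝ a b, ?_⟩,
      ⟨right_mem_segment ℝ a b, ?_⟩⟩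
    · intro x hx
      obtain ⟨t, ht0, ht1, _, hℓx⟩ := mem_segment_param ℓ hx
      nlinarith
    · intro x hx
      obtain ⟨t, ht0, ht1, _, hℓx⟩ := mem_segment_param ℓ hx
      nlinarith
  · intro h
    induction h with
    | refl => exact Relation.ReflTransGen.refl
    | @tail b c hab hbc ih =>
      refine Relation.ReflTransGen.trans ih ?_
      obtain ⟨G, ⟨hGne, hGex⟩, hmin, hmax⟩ := hbc
      set T := s.filter (fun p => p ∈ G) with hT
      have hGhull : G = convexHull ℝ (T : Set V) := face_hull hGne hGex
      have hTne : T.Nonempty := by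
        rcases hGne with ⟨x, hx⟩
        by_contra hc
        rw [Finset.not_nonempty_iff_eq_empty] at hc
        rw [hGhull, hc] at hx
        simp at hx
      have hℓneg : NonconstOnEdges (convexHull ℝ (s : Set V)) (-ℓ) := by
        intro x y he hc
        apply hℓ x y he
        have h1 : (-ℓ) x = -(ℓ x) := rfl
        have h2 : (-ℓ) y = -(ℓ y) := rfl
        rw [h1, h2] at hc
        linarith [hc]
      have hmaxneg : MaxAt (-ℓ) G b := by
        refine ⟨hmin.1, fun x hx => ?_⟩
        have := hmin.2 x hx
        show -(ℓ x) ≤ -(ℓ b)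
        linarith
      have hbvex : IsExposed ℝ G {b} := (max_vertex s (-ℓ) hℓneg hTne hGhull hGex hmaxneg).1
      rw [hGhull] at hbvex hmax hGex
      exact path_lemma s ℓ hℓ ((T.filter (fun p => ℓ b < ℓ p)).card) T hTne hGex b c
        hbvex hmax (le_refl _)
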